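/- For each n ∈ ℤ₊ let φₙ : ℝ → ℂ be continuously differentiable with φₙ ∈ L¹(ℝ), φₙ′ ∈ L¹(ℝ), and φₙ(x) → 0 as |x| → ∞. Suppose there are real numbers bₙ > 0 and cₙ ∈ ℝ (with b₋₁ = 0) such that φₙ′ = −bₙ₋₁φₙ₋₁ + i cₙ φₙ + bₙ φₙ₊₁ for every n ∈ ℤ₊. Define ϑₙ(ξ) = (−i)ⁿ φ̂ₙ(ξ), where φ̂(ξ) = (2π)^{−1/2} ∫_ℝ φ(x) e^{−iξx} dx is the unitary Fourier transform. Then for every ξ ∈ ℝ and every n ∈ ℤ₊ the three-term recurrence bₙ ϑₙ₊₁(ξ) = (ξ − cₙ) ϑₙ(ξ) − bₙ₋₁ ϑₙ₋₁(ξ) holds (with ϑ₋₁ := 0). -/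

import Mathlib

open MeasureTheory Filter Real Complex

lemma key_deriv_ft (f f' : ℝ → ℂ) (hd : ∀ x, HasDerivAt f (f' x) x)
    (hf : Integrable f) (hf' : Integrable f') (ξ : ℝ) :
    ∫ x : ℝ, f' x * Complex.exp (-Complex.I * ξ * x)
      = Complex.I * ξ * ∫ x : ℝ, f x * Complex.exp (-Complex.I * ξ * x) := by
  have hde : deriv f = f' := funext fun x => (hd x).deriv
  have h := Real.fourier_deriv hf (fun x => (hd x).differentiableAt) (hde ▸ hf')
  have h2 := congrFun h (ξ / (2 * π))
  rw [hde] at h2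
  rw [Real.fourier_real_eq_integral_exp_smul,
    Real.fourier_real_eq_integral_exp_smul] at h2
  have hπ : (π : ℝ) ≠ 0 := Real.pi_ne_zero
  have hexp : ∀ v : ℝ, ((-2 * π * v * (ξ / (2 * π)) : ℝ) : ℂ) * Complex.I
      = -Complex.I * ξ * v := by
    intro v
    have : (-2 * π * v * (ξ / (2 * π)) : ℝ) = -(v * ξ) := by field_simp
    rw [this]; push_cast; ring
  simp only [hexp, smul_eq_mul] at h2
  have h3 : (2 * (π : ℂ) * Complex.I * ((ξ / (2 * π) : ℝ) : ℂ)) = Complex.I * ξ := by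
    have hπ' : (π : ℂ) ≠ 0 := Complex.ofReal_ne_zero.mpr hπ
    push_cast; field_simp
  rw [h3] at h2
  have e1 : ∀ g : ℝ → ℂ, ∫ x : ℝ, g x * Complex.exp (-Complex.I * ξ * x)
      = ∫ x : ℝ, Complex.exp (-Complex.I * ξ * x) * g x := fun g =>
    by simp_rw [mul_comm]
  rw [e1, e1]; exact h2

lemma integrable_mul_exp (f : ℝ → ℂ) (hf : Integrable f) (ξ : ℝ) :
    Integrable (fun x : ℝ => f x * Complex.exp (-Complex.I * ξ * x)) := by
  have h : Integrable (fun x : ℝ => Complex.exp (-Complex.I * ξ * x) * f x) := by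
    apply hf.bdd_mul (c := 1)
    · exact (Complex.continuous_exp.comp (by continuity)).aestronglyMeasurable
    · refine Filter.Eventually.of_forall fun x => le_of_eq ?_
      rw [Complex.norm_exp]
      have : (-Complex.I * ξ * x).re = 0 := by simp [Complex.mul_re]
      rw [this, Real.exp_zero]
  exact h.congr (Filter.Eventually.of_forall fun x => mul_comm _ _)


/-- The unitary Fourier transform `φ̂(ξ) = (2π)^{−1/2} ∫_ℝ φ(x) e^{−iξx} dx`. -/
noncomputable def unitaryFourier (φ : ℝ → ℂ) (ξ : ℝ) : ℂ :=
  ((Real.sqrt (2 * Real.pi) : ℂ))⁻¹ * ∫ x : ℝ, φ x * Complex.exp (-Complex.I * ξ * x)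

/-- if `{φₙ}` are `C¹`, integrable with integrable derivatives, vanishing at
`±∞`, and satisfy the T-system relation `φₙ′ = −bₙ₋₁φₙ₋₁ + i cₙ φₙ + bₙ φₙ₊₁` with real
`bₙ > 0`, `cₙ ∈ ℝ` (and `b₋₁ = 0`), then `ϑₙ(ξ) = (−i)ⁿ φ̂ₙ(ξ)` satisfies the three-term
recurrence `bₙ ϑₙ₊₁(ξ) = (ξ − cₙ) ϑₙ(ξ) − bₙ₋₁ ϑₙ₋₁(ξ)` (with `ϑ₋₁ := 0`). -/
theorem tSystem_fourierTransform_threeTermRecurrence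
    (φ φ' : ℕ → ℝ → ℂ) (b c : ℕ → ℝ)
    (hderiv : ∀ n, ∀ x : ℝ, HasDerivAt (φ n) (φ' n x) x)
    (hcont : ∀ n, Continuous (φ' n))
    (hint : ∀ n, Integrable (φ n))
    (hint' : ∀ n, Integrable (φ' n))
    (hdecay : ∀ n, Tendsto (φ n) (cocompact ℝ) (nhds 0))
    (hb : ∀ n, 0 < b n)
    (hrel : ∀ n, ∀ x : ℝ, φ' n x
      = -(if n = 0 then (0 : ℂ) else (b (n - 1) : ℂ)) * φ (n - 1) x
        + Complex.I * (c n : ℂ) * φ n x + (b n : ℂ) * φ (n + 1) x) :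
    ∀ (ξ : ℝ) (n : ℕ),
      (b n : ℂ) * ((-Complex.I) ^ (n + 1) * unitaryFourier (φ (n + 1)) ξ)
        = ((ξ : ℂ) - (c n : ℂ)) * ((-Complex.I) ^ n * unitaryFourier (φ n) ξ)
          - (if n = 0 then (0 : ℂ)
              else (b (n - 1) : ℂ) * ((-Complex.I) ^ (n - 1) * unitaryFourier (φ (n - 1)) ξ)) := by
  intro ξ n
  set e : ℝ → ℂ := fun x => Complex.exp (-Complex.I * ξ * x) with he
  set F : ℕ → ℂ := fun k => ∫ x : ℝ, φ k x * e x with hF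
  set s : ℂ := ((Real.sqrt (2 * Real.pi) : ℂ))⁻¹ with hs
  have hI : ∀ k, Integrable (fun x : ℝ => φ k x * e x) :=
    fun k => integrable_mul_exp (φ k) (hint k) ξ
  set B : ℂ := if n = 0 then (0 : ℂ) else (b (n - 1) : ℂ) with hB
  have lin : ∫ x : ℝ, φ' n x * e x
      = -B * F (n - 1) + Complex.I * (c n) * F n + (b n) * F (n + 1) := by
    have step : ∀ x : ℝ, φ' n x * e x
        = -B * (φ (n - 1) x * e x) + Complex.I * (c n) * (φ n x * e x)
          + (b n) * (φ (n + 1) x * e x) := fun x => by rw [hrel n x]; ring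
    have i1 : Integrable (fun x : ℝ => -B * (φ (n - 1) x * e x)) := (hI _).const_mul _
    have i2 : Integrable (fun x : ℝ => Complex.I * (c n) * (φ n x * e x)) := (hI _).const_mul _
    have i3 : Integrable (fun x : ℝ => (b n : ℂ) * (φ (n + 1) x * e x)) := (hI _).const_mul _
    calc ∫ x : ℝ, φ' n x * e x
        = ∫ x : ℝ, (-B * (φ (n - 1) x * e x) + Complex.I * (c n) * (φ n x * e x)
            + (b n) * (φ (n + 1) x * e x)) := by simp_rw [step]
      _ = (∫ x : ℝ, (-B * (φ (n - 1) x * e x) + Complex.I * (c n) * (φ n x * e x)))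
            + ∫ x : ℝ, (b n : ℂ) * (φ (n + 1) x * e x) := integral_add (i1.add i2) i3
      _ = ((∫ x : ℝ, -B * (φ (n - 1) x * e x))
            + ∫ x : ℝ, Complex.I * (c n) * (φ n x * e x))
            + ∫ x : ℝ, (b n : ℂ) * (φ (n + 1) x * e x) := by rw [integral_add i1 i2]
      _ = -B * F (n - 1) + Complex.I * (c n) * F n + (b n) * F (n + 1) := by
            rw [integral_const_mul, integral_const_mul, integral_const_mul]
  have keyn : ∫ x : ℝ, φ' n x * e x = Complex.I * ξ * F n :=
    key_deriv_ft (φ n) (φ' n) (hderiv n) (hint n) (hint' n) ξ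
  have main : (b n : ℂ) * F (n + 1)
      = Complex.I * ((ξ : ℂ) - c n) * F n + B * F (n - 1) := by
    linear_combination lin.symm.trans keyn
  have hu : ∀ k, unitaryFourier (φ k) ξ = s * F k := fun k => rfl
  rcases n with _ | m
  · rw [hB, if_pos rfl] at main
    simp only [hu, pow_zero, pow_one, reduceIte]
    linear_combination (-Complex.I) * s * main - ((ξ : ℂ) - c 0) * s * F 0 * Complex.I_sq
  · have hm : ¬ (m + 1 = 0) := Nat.succ_ne_zero m
    rw [hB, if_neg hm, Nat.add_sub_cancel] at main
    simp only [hu, if_neg hm, Nat.add_sub_cancel]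
    set p : ℂ := (-Complex.I) ^ m with hp
    have p1 : (-Complex.I) ^ (m + 1) = p * (-Complex.I) := pow_succ _ _
    have p2 : (-Complex.I) ^ (m + 1 + 1) = p * (-Complex.I) * (-Complex.I) := by
      rw [pow_succ, p1]
    rw [p1, p2]
    linear_combination (p * (-Complex.I) * (-Complex.I) * s) * main
      + (Complex.I * ((ξ : ℂ) - c (m + 1)) * p * s * F (m + 1)
          + (b m : ℂ) * p * s * F m) * Complex.I_sq
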